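/- Let G be a directed graph on the boundary vertices of a block such that the edge relation is transitively closed along undirected crossings in the following sense coming from grid reachability: if (u₁, v₁) and (u₂, v₂) are edges of G that cross each other as chords of the boundary cycle, then (u₁, v₂) and (u₂, v₁) are also edges of G. Prove that this 'crossing-closure' property holds for the reachability relation of any planar graph drawn inside a disk with the boundary vertices on the disk boundary: if there is a path from u₁ to v₁ and a path from u₂ to v₂, and the chords {u₁,v₁} and {u₂,v₂} interleave on the boundary circle, then there are paths from u₁ to v₂ and from u₂ to v₁. -/

import Mathlib

open Complex Real

lemma re_div_pos {z w : ℂ} (h : ‖w - z‖ < ‖z‖) : 0 < (w / z).re := by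
  have hz : z ≠ 0 := by
    intro h0; rw [h0] at h; simp at h
    exact absurd h (norm_nonneg w).not_gt
  have h1 : w / z = 1 + (w - z) / z := by field_simp; ring
  have h2 : ‖(w - z) / z‖ < 1 := by
    rw [norm_div, div_lt_one (norm_pos_iff.mpr hz)]; exact h
  have h3 : |((w - z) / z).re| ≤ ‖(w - z) / z‖ := Complex.abs_re_le_norm _
  rw [h1]; simp only [Complex.add_re, Complex.one_re]
  have := abs_le.mp h3
  linarith

lemma exp_arg_eq (z : ℂ) (hz : z ≠ 0) :
    Complex.exp ((Complex.arg z : ℂ) * I) = z / ‖z‖ := by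
  have e := Complex.norm_mul_exp_arg_mul_I z
  have hA : (‖z‖ : ℂ) ≠ 0 := by
    simpa using norm_ne_zero_iff.mpr hz
  rw [eq_div_iff hA, mul_comm]; exact e

lemma arg_diff {c z w : ℂ} (hz : 0 < (z / c).re) (hw : 0 < (w / c).re) :
    Complex.arg (w / z) = Complex.arg (w / c) - Complex.arg (z / c) := by
  have hc : c ≠ 0 := by rintro rfl; simp at hz
  have hz0 : z ≠ 0 := by rintro rfl; simp at hz
  have hw0 : w ≠ 0 := by rintro rfl; simp at hw
  have hx : |Complex.arg (z / c)| < π / 2 := Complex.abs_arg_lt_pi_div_two_iff.mpr (Or.inl hz)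
  have hy : |Complex.arg (w / c)| < π / 2 := Complex.abs_arg_lt_pi_div_two_iff.mpr (Or.inl hw)
  have hxy : w / z = (w / c) / (z / c) := by field_simp
  have hzc0 : z / c ≠ 0 := div_ne_zero hz0 hc
  have hwc0 : w / c ≠ 0 := div_ne_zero hw0 hc
  have hwz0 : w / z ≠ 0 := div_ne_zero hw0 hz0
  have habs : ‖w / z‖ = ‖w / c‖ / ‖z / c‖ := by
    rw [hxy, norm_div]
  have hAzc : (‖z / c‖ : ℂ) ≠ 0 := by simpa using norm_ne_zero_iff.mpr hzc0
  have hAwc : (‖w / c‖ : ℂ) ≠ 0 := by simpa using norm_ne_zero_iff.mpr hwc0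
  have hmul : (w / z) * (z / c) = w / c := by field_simp
  have habsm : ‖w / z‖ * ‖z / c‖ = ‖w / c‖ := by
    rw [← norm_mul, hmul]
  have h1 := Complex.norm_mul_exp_arg_mul_I (w / z)
  have h3 := Complex.norm_mul_exp_arg_mul_I (z / c)
  have h2 := Complex.norm_mul_exp_arg_mul_I (w / c)
  have hA : ((‖w / z‖ : ℂ) * (‖z / c‖ : ℂ)) ≠ 0 :=
    mul_ne_zero (Complex.ofReal_ne_zero.mpr (norm_ne_zero_iff.mpr hwz0))
      (Complex.ofReal_ne_zero.mpr (norm_ne_zero_iff.mpr hzc0))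
  have key : Complex.exp ((Complex.arg (w / z) : ℂ) * I) =
      Complex.exp (((Complex.arg (w / c) - Complex.arg (z / c) : ℝ) : ℂ) * I) := by
    rw [Complex.ofReal_sub, sub_mul, Complex.exp_sub,
      eq_div_iff (Complex.exp_ne_zero _)]
    apply mul_left_cancel₀ hA
    calc (↑(‖w / z‖) * ↑(‖z / c‖)) *
          (Complex.exp ((Complex.arg (w / z) : ℂ) * I) *
            Complex.exp ((Complex.arg (z / c) : ℂ) * I))
        = (↑(‖w / z‖) * Complex.exp ((Complex.arg (w / z) : ℂ) * I)) *
            (↑(‖z / c‖) * Complex.exp ((Complex.arg (z / c) : ℂ) * I)) := by ring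
      _ = (w / z) * (z / c) := by rw [h1, h3]
      _ = w / c := hmul
      _ = ↑(‖w / c‖) * Complex.exp ((Complex.arg (w / c) : ℂ) * I) := h2.symm
      _ = (↑(‖w / z‖) * ↑(‖z / c‖)) *
            Complex.exp ((Complex.arg (w / c) : ℂ) * I) := by
          rw [show ((‖w / z‖ : ℂ) * ↑(‖z / c‖))
              = ((‖w / c‖ : ℂ)) by push_cast [← habsm]; ring]
  obtain ⟨k, hk⟩ := Complex.exp_eq_exp_iff_exists_int.mp key
  have hk' : Complex.arg (w / z) =
      (Complex.arg (w / c) - Complex.arg (z / c)) + k * (2 * π) := by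
    have : ((Complex.arg (w / z) : ℝ) : ℂ) =
        (((Complex.arg (w / c) - Complex.arg (z / c)) + (k : ℝ) * (2 * π) : ℝ) : ℂ) := by
      apply mul_right_cancel₀ Complex.I_ne_zero
      rw [hk]; push_cast; ring
    exact_mod_cast this
  have h4 : Complex.arg (w / z) ≤ π := Complex.arg_le_pi _
  have h5 : -π < Complex.arg (w / z) := Complex.neg_pi_lt_arg _
  have habs1 := abs_lt.mp hx
  have habs2 := abs_lt.mp hy
  have hpi := Real.pi_pos
  have hk0 : (k : ℝ) = 0 := by
    rcases lt_trichotomy k 0 with h | h | h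
    · have h'' : k ≤ -1 := by omega
      have h' : (k : ℝ) ≤ -1 := by exact_mod_cast h''
      nlinarith
    · rw [h]; norm_num
    · have h' : (1 : ℝ) ≤ (k : ℝ) := by exact_mod_cast h
      nlinarith
  rw [hk', hk0]; ring


lemma halfplane {w u : ℂ} (hw : ‖w‖ ≤ 1) (hu : ‖u‖ = 1) (hne : w ≠ u) :
    0 < ((u - w) / u).re := by
  have hu0 : u ≠ 0 := by intro h; rw [h] at hu; simp at hu
  have h1 : (u - w) / u = 1 - w / u := by field_simp
  rw [h1, Complex.sub_re, Complex.one_re]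
  have habs : ‖w / u‖ ≤ 1 := by rw [norm_div, hu, div_one]; exact hw
  have hre : (w / u).re ≤ ‖w / u‖ := Complex.re_le_norm _
  by_contra hcon
  push_neg at hcon
  have hre1 : (w / u).re = 1 := le_antisymm (hre.trans habs) (by linarith)
  have habs1 : ‖w / u‖ = 1 := le_antisymm habs (by rw [← hre1]; exact hre)
  have him : (w / u).im = 0 := by
    have := Complex.sq_norm (w / u)
    rw [habs1, Complex.normSq_apply, hre1] at this
    nlinarith
  have hwu : w / u = 1 := by
    apply Complex.ext <;> simp [hre1, him]
  rw [div_eq_one_iff_eq hu0] at hwu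
  exact hne hwu

lemma one_sub_exp (θ : ℝ) :
    1 - Complex.exp ((θ : ℂ) * I) =
      ((2 * Real.sin (θ / 2) : ℝ) : ℂ) * Complex.exp ((((θ - π) / 2 : ℝ) : ℂ) * I) := by
  have hsin : ((2 * Real.sin (θ / 2) : ℝ) : ℂ)
      = (Complex.exp (-((θ / 2 : ℂ) * I)) - Complex.exp ((θ / 2 : ℂ) * I)) * I := by
    push_cast [Complex.ofReal_sin]
    rw [Complex.sin]
    ring
  have hsplit : Complex.exp ((((θ - π) / 2 : ℝ) : ℂ) * I)
      = Complex.exp ((θ / 2 : ℂ) * I) * Complex.exp (-(((π : ℝ) / 2 : ℂ) * I)) := by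
    rw [← Complex.exp_add]; congr 1; push_cast; ring
  have hnI : Complex.exp (-(((π : ℝ) / 2 : ℂ) * I)) = -I := by
    rw [Complex.exp_neg, Complex.exp_mul_I]
    push_cast
    rw [Complex.cos_pi_div_two, Complex.sin_pi_div_two]
    simp
  rw [hsin, hsplit, hnI]
  have e1 : Complex.exp (-((θ / 2 : ℂ) * I)) * Complex.exp ((θ / 2 : ℂ) * I) = 1 := by
    rw [← Complex.exp_add]; simp
  have e2 : Complex.exp ((θ / 2 : ℂ) * I) * Complex.exp ((θ / 2 : ℂ) * I)
      = Complex.exp ((θ : ℂ) * I) := by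
    rw [← Complex.exp_add]; congr 1; ring
  calc 1 - Complex.exp ((θ : ℂ) * I)
      = Complex.exp (-((θ / 2 : ℂ) * I)) * Complex.exp ((θ / 2 : ℂ) * I)
        - Complex.exp ((θ / 2 : ℂ) * I) * Complex.exp ((θ / 2 : ℂ) * I) := by rw [e1, e2]
    _ = (Complex.exp (-((θ / 2 : ℂ) * I)) - Complex.exp ((θ / 2 : ℂ) * I)) * I *
        (Complex.exp ((θ / 2 : ℂ) * I) * -I) := by ring_nf; rw [Complex.I_sq]; ring

lemma argOne_pos {θ : ℝ} (h0 : 0 < θ) (h2 : θ < 2 * π) :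
    Complex.arg (1 - Complex.exp ((θ : ℂ) * I)) = (θ - π) / 2 := by
  have hpi := Real.pi_pos
  have hs : 0 < 2 * Real.sin (θ / 2) := by
    have := Real.sin_pos_of_pos_of_lt_pi (x := θ / 2) (by linarith) (by linarith)
    linarith
  rw [one_sub_exp, Complex.arg_real_mul _ hs, Complex.exp_mul_I]
  exact Complex.arg_cos_add_sin_mul_I ⟨by linarith, by linarith⟩

lemma argOne_neg {θ : ℝ} (h0 : -(2 * π) < θ) (h2 : θ < 0) :
    Complex.arg (1 - Complex.exp ((θ : ℂ) * I)) = (θ + π) / 2 := by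
  have hpi := Real.pi_pos
  have hconj : 1 - Complex.exp ((θ : ℂ) * I)
      = (starRingEnd ℂ) (1 - Complex.exp (((-θ : ℝ) : ℂ) * I)) := by
    rw [map_sub, map_one, ← Complex.exp_conj]
    congr 2
    simp [Complex.conj_I]
  have hpos : Complex.arg (1 - Complex.exp (((-θ : ℝ) : ℂ) * I)) = (-θ - π) / 2 :=
    argOne_pos (by linarith) (by linarith)
  rw [hconj, Complex.arg_conj, hpos]
  rw [if_neg (by intro h; nlinarith)]
  ring


lemma div_form1 (x y : ℝ) :
    (Complex.exp ((x:ℂ)*I) - Complex.exp ((y:ℂ)*I)) / (-Complex.exp ((y:ℂ)*I))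
      = 1 - Complex.exp (((x - y : ℝ):ℂ) * I) := by
  have hy := Complex.exp_ne_zero ((y:ℂ)*I)
  rw [Complex.ofReal_sub, sub_mul, Complex.exp_sub]
  field_simp
  ring

lemma div_form2 (x y : ℝ) :
    (Complex.exp ((x:ℂ)*I) - Complex.exp ((y:ℂ)*I)) / (Complex.exp ((x:ℂ)*I))
      = 1 - Complex.exp (((y - x : ℝ):ℂ) * I) := by
  have hx := Complex.exp_ne_zero ((x:ℂ)*I)
  rw [Complex.ofReal_sub, sub_mul, Complex.exp_sub]
  field_simp

/-- telescoping edge sum -/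
lemma edge_sum (m : ℕ) (c : ℂ) (zz : ℕ → ℂ) (hc : ∀ i ≤ m, 0 < (zz i / c).re) :
    ∑ i ∈ Finset.range m, Complex.arg (zz (i + 1) / zz i)
      = Complex.arg (zz m / c) - Complex.arg (zz 0 / c) := by
  rw [← Finset.sum_range_sub (fun i => Complex.arg (zz i / c)) m]
  apply Finset.sum_congr rfl
  intro i hi
  rw [Finset.mem_range] at hi
  exact arg_diff (hc i (le_of_lt hi)) (hc (i + 1) hi)

/-- The main geometric lemma: two disjoint paths in the closed unit disk cannot connect
interleaved boundary points. -/
lemma core_oriented {α β γ δ : ℝ} (hα : 0 ≤ α) (hab : α < β) (hbc : β < γ) (hcd : γ < δ)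
    (hd2 : δ < 2 * π) (f g : ℝ → ℂ) (hf : Continuous f) (hg : Continuous g)
    (hfd : ∀ t, ‖f t‖ ≤ 1) (hgd : ∀ t, ‖g t‖ ≤ 1)
    (hf0 : f 0 = Complex.exp ((α : ℂ) * I)) (hf1 : f 1 = Complex.exp ((γ : ℂ) * I))
    (hg0 : g 0 = Complex.exp ((β : ℂ) * I)) (hg1 : g 1 = Complex.exp ((δ : ℂ) * I))
    (hdisj : ∀ s t : ℝ, f s ≠ g t) : False := by
  have hpi := Real.pi_pos
  set A := Complex.exp ((α : ℂ) * I) with hA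
  set B := Complex.exp ((β : ℂ) * I) with hB
  set C := Complex.exp ((γ : ℂ) * I) with hC
  set D := Complex.exp ((δ : ℂ) * I) with hD
  have hAa : ‖A‖ = 1 := Complex.norm_exp_ofReal_mul_I α
  have hBa : ‖B‖ = 1 := Complex.norm_exp_ofReal_mul_I β
  have hCa : ‖C‖ = 1 := Complex.norm_exp_ofReal_mul_I γ
  have hDa : ‖D‖ = 1 := Complex.norm_exp_ofReal_mul_I δ
  have hA0 : A ≠ 0 := Complex.exp_ne_zero _
  have hB0 : B ≠ 0 := Complex.exp_ne_zero _
  have hC0 : C ≠ 0 := Complex.exp_ne_zero _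
  have hD0 : D ≠ 0 := Complex.exp_ne_zero _
  -- the difference map
  set h : ℝ × ℝ → ℂ := fun x => f x.1 - g x.2 with hh
  have hcont : Continuous h := (hf.comp continuous_fst).sub (hg.comp continuous_snd)
  have hne : ∀ x : ℝ × ℝ, h x ≠ 0 := fun x => sub_ne_zero.mpr (hdisj x.1 x.2)
  set K : Set (ℝ × ℝ) := Set.Icc (0:ℝ) 1 ×ˢ Set.Icc (0:ℝ) 1 with hK
  have hKc : IsCompact K := isCompact_Icc.prod isCompact_Icc
  have hKne : K.Nonempty := ⟨(0, 0), ⟨⟨le_refl _, zero_le_one⟩, ⟨le_refl _, zero_le_one⟩⟩⟩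
  obtain ⟨x₀, hx₀K, hmin⟩ := hKc.exists_isMinOn hKne
    ((continuous_norm.comp hcont).continuousOn)
  set δ₀ := ‖h x₀‖ with hδ₀
  have hδpos : 0 < δ₀ := norm_pos_iff.mpr (hne x₀)
  have hδle : ∀ x ∈ K, δ₀ ≤ ‖h x‖ := fun x hx => hmin hx
  -- uniform continuity
  have hUC := hKc.uniformContinuousOn_of_continuous hcont.continuousOn
  rw [Metric.uniformContinuousOn_iff] at hUC
  obtain ⟨η, hηpos, hη⟩ := hUC δ₀ hδpos
  obtain ⟨n, hn⟩ := exists_nat_one_div_lt hηpos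
  set m : ℕ := n + 1 with hm
  have hm0 : 0 < m := Nat.succ_pos n
  have hmR : (0:ℝ) < m := by exact_mod_cast hm0
  have hmη : 1 / (m:ℝ) < η := by exact_mod_cast hn
  -- grid
  set pt : ℕ → ℕ → ℝ × ℝ := fun i j => ((i : ℝ) / m, (j : ℝ) / m) with hpt
  set z : ℕ → ℕ → ℂ := fun i j => h (pt i j) with hz
  have hptK : ∀ i j, i ≤ m → j ≤ m → pt i j ∈ K := by
    intro i j hi hj
    constructor <;> constructor
    · positivity
    · rw [div_le_one hmR]; exact_mod_cast hi
    · positivity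
    · rw [div_le_one hmR]; exact_mod_cast hj
  have hnear : ∀ i j i' j', i ≤ m → j ≤ m → i' ≤ m → j' ≤ m →
      i ≤ i' → i' ≤ i + 1 → j ≤ j' → j' ≤ j + 1 →
      ‖z i' j' - z i j‖ < δ₀ := by
    intro i j i' j' hi hj hi' hj' h1 h2 h3 h4
    have key : ∀ a b : ℕ, a ≤ b → b ≤ a + 1 → dist ((a:ℝ)/m) ((b:ℝ)/m) ≤ 1/(m:ℝ) := by
      intro a b ha hb
      have h1' : (a:ℝ) ≤ (b:ℝ) := by exact_mod_cast ha
      have h2' : (b:ℝ) ≤ (a:ℝ) + 1 := by exact_mod_cast hb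
      rw [Real.dist_eq, abs_sub_comm, div_sub_div_same,
        _root_.abs_of_nonneg (div_nonneg (by linarith) hmR.le),
        div_le_div_iff_of_pos_right hmR]
      linarith
    have hdist : dist (pt i j) (pt i' j') < η := by
      rw [Prod.dist_eq]
      exact lt_of_le_of_lt (max_le (key i i' h1 h2) (key j j' h3 h4)) hmη
    have := hη _ (hptK i' j' hi' hj') _ (hptK i j hi hj) (by rw [dist_comm]; exact hdist)
    rw [Complex.dist_eq] at this
    exact this
  -- positivity of relative real parts
  have hre : ∀ i j i' j', i ≤ m → j ≤ m → i' ≤ m → j' ≤ m →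
      i ≤ i' → i' ≤ i + 1 → j ≤ j' → j' ≤ j + 1 → 0 < (z i' j' / z i j).re := by
    intro i j i' j' hi hj hi' hj' h1 h2 h3 h4
    exact re_div_pos (lt_of_lt_of_le (hnear i j i' j' hi hj hi' hj' h1 h2 h3 h4)
      (hδle _ (hptK i j hi hj)))
  set Hs : ℕ → ℕ → ℝ := fun i j => Complex.arg (z (i + 1) j / z i j) with hHs
  set Vv : ℕ → ℕ → ℝ := fun i j => Complex.arg (z i (j + 1) / z i j) with hVv
  -- square relation
  have hsq : ∀ i j, i < m → j < m → Hs i (j + 1) = Hs i j + Vv (i + 1) j - Vv i j := by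
    intro i j hi hj
    have b00 := hre i j i j hi.le hj.le hi.le hj.le le_rfl (Nat.le_succ _) le_rfl (Nat.le_succ _)
    have b10 := hre i j (i + 1) j hi.le hj.le hi hj.le (Nat.le_succ _) le_rfl le_rfl (Nat.le_succ _)
    have b01 := hre i j i (j + 1) hi.le hj.le hi.le hj le_rfl (Nat.le_succ _) (Nat.le_succ _) le_rfl
    have b11 := hre i j (i + 1) (j + 1) hi.le hj.le hi hj (Nat.le_succ _) le_rfl (Nat.le_succ _) le_rfl
    have E1 : Complex.arg (z (i+1) (j+1) / z i (j+1))
        = Complex.arg (z (i+1) (j+1) / z i j) - Complex.arg (z i (j+1) / z i j) :=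
      arg_diff b01 b11
    have E2 : Complex.arg (z (i+1) j / z i j)
        = Complex.arg (z (i+1) j / z i j) - Complex.arg (z i j / z i j) :=
      arg_diff b00 b10
    have E3 : Complex.arg (z (i+1) (j+1) / z (i+1) j)
        = Complex.arg (z (i+1) (j+1) / z i j) - Complex.arg (z (i+1) j / z i j) :=
      arg_diff b10 b11
    have E4 : Complex.arg (z i (j+1) / z i j)
        = Complex.arg (z i (j+1) / z i j) - Complex.arg (z i j / z i j) :=
      arg_diff b00 b01
    simp only [hHs, hVv]
    linarith [E1, E2, E3, E4]
  -- grid values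
  have hgrid : ∀ i j : ℕ, z i j = f ((i:ℝ)/m) - g ((j:ℝ)/m) := fun i j => rfl
  have hmm1 : ((m:ℝ))/(m:ℝ) = 1 := div_self hmR.ne'
  have h00 : z 0 0 = A - B := by rw [hgrid]; norm_num [hf0, hg0]
  have hM0 : z m 0 = C - B := by rw [hgrid, hmm1]; norm_num [hf1, hg0]
  have h0M : z 0 m = A - D := by rw [hgrid, hmm1]; norm_num [hf0, hg1]
  have hMM : z m m = C - D := by rw [hgrid, hmm1]; norm_num [hf1, hg1]
  have hswap : ∀ X Y : ℂ, (X - Y)/(-Y) = (Y - X)/Y := by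
    intro X Y; rw [div_neg, ← neg_div, neg_sub]
  -- row recursion
  have hRstep : ∀ j, j < m → (∑ i ∈ Finset.range m, Hs i (j+1))
      = (∑ i ∈ Finset.range m, Hs i j) + (Vv m j - Vv 0 j) := by
    intro j hj
    have h1 : ∀ i ∈ Finset.range m, Hs i (j+1) = Hs i j + (Vv (i+1) j - Vv i j) := by
      intro i hi; rw [Finset.mem_range] at hi; rw [hsq i j hi hj]; ring
    rw [Finset.sum_congr rfl h1, Finset.sum_add_distrib,
      Finset.sum_range_sub (fun i => Vv i j)]
  have htot : (∑ i ∈ Finset.range m, Hs i m) - (∑ i ∈ Finset.range m, Hs i 0)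
      = (∑ j ∈ Finset.range m, Vv m j) - (∑ j ∈ Finset.range m, Vv 0 j) := by
    rw [← Finset.sum_range_sub (fun j => ∑ i ∈ Finset.range m, Hs i j) m,
      ← Finset.sum_sub_distrib]
    apply Finset.sum_congr rfl
    intro j hj; rw [Finset.mem_range] at hj
    rw [hRstep j hj]; ring
  -- edge sums
  have hbot : (∑ i ∈ Finset.range m, Hs i 0)
      = Complex.arg ((C - B)/(-B)) - Complex.arg ((A - B)/(-B)) := by
    have hcond : ∀ i, i ≤ m → 0 < ((fun i => z i 0) i / (-B)).re := by
      intro i _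
      simp only
      rw [hgrid]
      norm_num [hg0]
      rw [hswap]
      exact halfplane (hfd _) hBa (fun hEq => hdisj ((i:ℝ)/m) 0 (hEq.trans hg0.symm))
    have := edge_sum m (-B) (fun i => z i 0) hcond
    rw [hM0, h00] at this
    exact this
  have htop : (∑ i ∈ Finset.range m, Hs i m)
      = Complex.arg ((C - D)/(-D)) - Complex.arg ((A - D)/(-D)) := by
    have hcond : ∀ i, i ≤ m → 0 < ((fun i => z i m) i / (-D)).re := by
      intro i _
      simp only
      rw [hgrid, hmm1]
      norm_num [hg1]
      rw [hswap]
      exact halfplane (hfd _) hDa (fun hEq => hdisj ((i:ℝ)/m) 1 (by rw [hEq, hg1]))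
    have := edge_sum m (-D) (fun i => z i m) hcond
    rw [hMM, h0M] at this
    exact this
  have hleft : (∑ j ∈ Finset.range m, Vv 0 j)
      = Complex.arg ((A - D)/A) - Complex.arg ((A - B)/A) := by
    have hcond : ∀ j, j ≤ m → 0 < ((fun j => z 0 j) j / A).re := by
      intro j _
      simp only
      rw [hgrid]
      norm_num [hf0]
      exact halfplane (hgd _) hAa (fun hEq => hdisj 0 ((j:ℝ)/m) (hf0.trans hEq.symm))
    have := edge_sum m A (fun j => z 0 j) hcond
    rw [h0M, h00] at this
    exact this
  have hright : (∑ j ∈ Finset.range m, Vv m j)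
      = Complex.arg ((C - D)/C) - Complex.arg ((C - B)/C) := by
    have hcond : ∀ j, j ≤ m → 0 < ((fun j => z m j) j / C).re := by
      intro j _
      simp only
      rw [hgrid, hmm1]
      norm_num [hf1]
      exact halfplane (hgd _) hCa (fun hEq => hdisj 1 ((j:ℝ)/m) (hf1.trans hEq.symm))
    have := edge_sum m C (fun j => z m j) hcond
    rw [hMM, hM0] at this
    exact this
  -- explicit arg values
  have T1 : Complex.arg ((C - D)/(-D)) = ((γ - δ) + π)/2 := by
    rw [hC, hD, div_form1, argOne_neg (by linarith) (by linarith)]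
  have T2 : Complex.arg ((A - D)/(-D)) = ((α - δ) + π)/2 := by
    rw [hA, hD, div_form1, argOne_neg (by linarith) (by linarith)]
  have T3 : Complex.arg ((C - B)/(-B)) = ((γ - β) - π)/2 := by
    rw [hC, hB, div_form1, argOne_pos (by linarith) (by linarith)]
  have T4 : Complex.arg ((A - B)/(-B)) = ((α - β) + π)/2 := by
    rw [hA, hB, div_form1, argOne_neg (by linarith) (by linarith)]
  have T5 : Complex.arg ((C - D)/C) = ((δ - γ) - π)/2 := by
    rw [hC, hD, div_form2, argOne_pos (by linarith) (by linarith)]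
  have T6 : Complex.arg ((C - B)/C) = ((β - γ) + π)/2 := by
    rw [hC, hB, div_form2, argOne_neg (by linarith) (by linarith)]
  have T7 : Complex.arg ((A - D)/A) = ((δ - α) - π)/2 := by
    rw [hA, hD, div_form2, argOne_pos (by linarith) (by linarith)]
  have T8 : Complex.arg ((A - B)/A) = ((β - α) - π)/2 := by
    rw [hA, hB, div_form2, argOne_pos (by linarith) (by linarith)]
  rw [hbot, htop, hleft, hright, T1, T2, T3, T4, T5, T6, T7, T8] at htot
  linarith

lemma core_sym {α β γ δ : ℝ} (hα : 0 ≤ α) (hab : α < β) (hbc : β < γ) (hcd : γ < δ)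
    (hd2 : δ < 2 * π) (f g : ℝ → ℂ) (hf : Continuous f) (hg : Continuous g)
    (hfd : ∀ t, ‖f t‖ ≤ 1) (hgd : ∀ t, ‖g t‖ ≤ 1)
    (hfe : (f 0 = Complex.exp ((α : ℂ) * I) ∧ f 1 = Complex.exp ((γ : ℂ) * I)) ∨
           (f 0 = Complex.exp ((γ : ℂ) * I) ∧ f 1 = Complex.exp ((α : ℂ) * I)))
    (hge : (g 0 = Complex.exp ((β : ℂ) * I) ∧ g 1 = Complex.exp ((δ : ℂ) * I)) ∨
           (g 0 = Complex.exp ((δ : ℂ) * I) ∧ g 1 = Complex.exp ((β : ℂ) * I)))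
    (hdisj : ∀ s t : ℝ, f s ≠ g t) : False := by
  have hrc : Continuous (fun t : ℝ => 1 - t) := continuous_const.sub continuous_id
  rcases hfe with ⟨hf0, hf1⟩ | ⟨hf0, hf1⟩ <;> rcases hge with ⟨hg0, hg1⟩ | ⟨hg0, hg1⟩
  · exact core_oriented hα hab hbc hcd hd2 f g hf hg hfd hgd hf0 hf1 hg0 hg1 hdisj
  · exact core_oriented hα hab hbc hcd hd2 f (fun t => g (1 - t)) hf (hg.comp hrc)
      hfd (fun t => hgd _) hf0 hf1 (by simpa using hg1) (by simpa using hg0)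
      (fun s t => hdisj s (1 - t))
  · exact core_oriented hα hab hbc hcd hd2 (fun t => f (1 - t)) g (hf.comp hrc) hg
      (fun t => hfd _) hgd (by simpa using hf1) (by simpa using hf0) hg0 hg1
      (fun s t => hdisj (1 - s) t)
  · exact core_oriented hα hab hbc hcd hd2 (fun t => f (1 - t)) (fun t => g (1 - t))
      (hf.comp hrc) (hg.comp hrc) (fun t => hfd _) (fun t => hgd _)
      (by simpa using hf1) (by simpa using hf0) (by simpa using hg1) (by simpa using hg0)
      (fun s t => hdisj (1 - s) (1 - t))

lemma pathOf {V : Type*} (E : V → V → Prop) (pos : V → ℂ)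
    (arc : ∀ u v : V, E u v → Set ℂ)
    (harc : ∀ (u v : V) (h : E u v), ∃ γ : unitInterval → ℂ,
      Continuous γ ∧ Function.Injective γ ∧ γ 0 = pos u ∧ γ 1 = pos v ∧
        Set.range γ = arc u v h)
    {x y : V} (hxy : Relation.ReflTransGen E x y) :
    ∃ f : ℝ → ℂ, Continuous f ∧ f 0 = pos x ∧ f 1 = pos y ∧
      ∀ t : ℝ, f t = pos x ∨ ∃ u v, ∃ h : E u v, Relation.ReflTransGen E x u ∧
        Relation.ReflTransGen E v y ∧ f t ∈ arc u v h := by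
  induction hxy with
  | refl => exact ⟨fun _ => pos x, continuous_const, rfl, rfl, fun t => Or.inl rfl⟩
  | @tail c d hxc hcd ih =>
    obtain ⟨f, hfc, hf0, hf1, hmem⟩ := ih
    obtain ⟨γ, hγc, _, hγ0, hγ1, hγr⟩ := harc _ _ hcd
    set g2 : ℝ → ℂ := Set.IccExtend zero_le_one γ with hg2
    have hg2c : Continuous g2 := hγc.Icc_extend'
    have hg20 : g2 0 = pos c := by rw [hg2, Set.IccExtend_left]; exact hγ0
    have hg21 : g2 1 = pos d := by rw [hg2, Set.IccExtend_right]; exact hγ1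
    have hg2mem : ∀ t : ℝ, g2 t ∈ arc c d hcd := by
      intro t; rw [← hγr]; exact ⟨_, rfl⟩
    refine ⟨fun t => if t ≤ 1/2 then f (2*t) else g2 (2*t - 1), ?_, ?_, ?_, ?_⟩
    · apply Continuous.if_le (hfc.comp (by continuity)) (hg2c.comp (by continuity))
        continuous_id continuous_const
      intro t ht
      have ht' : t = 1/2 := ht
      subst ht'
      norm_num [hf1, hg20]
    · norm_num [hf0]
    · norm_num [hg21]
    · intro t
      by_cases ht : t ≤ 1/2
      · simp only [if_pos ht]
        rcases hmem (2*t) with hl | ⟨u, v, he, hxu, hvy, hm⟩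
        · exact Or.inl hl
        · exact Or.inr ⟨u, v, he, hxu, hvy.tail hcd, hm⟩
      · simp only [if_neg ht]
        exact Or.inr ⟨c, d, hcd, hxc, Relation.ReflTransGen.refl, hg2mem _⟩



/-- The point on the unit circle corresponding to the `k`-th of `N` boundary vertices
(in counter-clockwise order). -/
noncomputable def circPt (N k : ℕ) : ℂ :=
  Complex.exp (2 * Real.pi * Complex.I * k / N)

/-- crossing-closure for the reachability relation of a planar graph drawn inside
a disk.  The digraph `E` is drawn in the closed unit disk: each vertex `v` is placed at a
point `pos v` of the disk, the `N` boundary vertices `b 0, …, b (N-1)` sit on the unit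
circle in counter-clockwise order, and every edge is drawn as an injective arc inside the
disk whose interior avoids vertex points, two arcs meeting only in common endpoints.
If there are directed paths `b p ⇝ b q` and `b r ⇝ b s` and the chords `{b p, b q}` and
`{b r, b s}` interleave on the boundary circle, then there are directed paths
`b p ⇝ b s` and `b r ⇝ b q`. -/
theorem stmt_3 {V : Type*} (E : V → V → Prop) (pos : V → ℂ)
    (hposinj : Function.Injective pos)
    (hdisk : ∀ v : V, ‖pos v‖ ≤ 1)
    (arc : ∀ u v : V, E u v → Set ℂ)
    (harc : ∀ (u v : V) (h : E u v), ∃ γ : unitInterval → ℂ,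
      Continuous γ ∧ Function.Injective γ ∧ γ 0 = pos u ∧ γ 1 = pos v ∧
        Set.range γ = arc u v h)
    (harcdisk : ∀ (u v : V) (h : E u v), ∀ z ∈ arc u v h, ‖z‖ ≤ 1)
    (hvert : ∀ (u v : V) (h : E u v) (w : V), pos w ∈ arc u v h → w = u ∨ w = v)
    (hcross : ∀ (u v : V) (h : E u v) (u' v' : V) (h' : E u' v'), (u, v) ≠ (u', v') →
      arc u v h ∩ arc u' v' h' ⊆
        {z | ∃ w : V, z = pos w ∧ (w = u ∨ w = v) ∧ (w = u' ∨ w = v')})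
    (N : ℕ) (b : Fin N → V)
    (hb : ∀ k : Fin N, pos (b k) = circPt N k.val)
    (p q r s : Fin N)
    (hinter :
      (min p.val q.val < min r.val s.val ∧ min r.val s.val < max p.val q.val ∧
        max p.val q.val < max r.val s.val) ∨
      (min r.val s.val < min p.val q.val ∧ min p.val q.val < max r.val s.val ∧
        max r.val s.val < max p.val q.val))
    (h1 : Relation.ReflTransGen E (b p) (b q))
    (h2 : Relation.ReflTransGen E (b r) (b s)) :
    Relation.ReflTransGen E (b p) (b s) ∧ Relation.ReflTransGen E (b r) (b q) := by
  classical
  by_cases hw : ∃ w, Relation.ReflTransGen E (b p) w ∧ Relation.ReflTransGen E w (b q) ∧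
      Relation.ReflTransGen E (b r) w ∧ Relation.ReflTransGen E w (b s)
  · obtain ⟨w, hpw, hwq, hrw, hws⟩ := hw
    exact ⟨hpw.trans hws, hrw.trans hwq⟩
  · exfalso
    obtain ⟨f1, hf1c, hf10, hf11, hmem1⟩ := pathOf E pos arc harc h1
    obtain ⟨f2, hf2c, hf20, hf21, hmem2⟩ := pathOf E pos arc harc h2
    have hdisj : ∀ s' t' : ℝ, f1 s' ≠ f2 t' := by
      intro s' t' hEq
      apply hw
      rcases hmem1 s' with hl1 | ⟨u, v, he, hpu, hvq, hm1⟩ <;>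
        rcases hmem2 t' with hl2 | ⟨u', v', he', hru', hv's, hm2⟩
      · have hbb : b p = b r := hposinj (by rw [← hl1, ← hl2, hEq])
        exact ⟨b p, Relation.ReflTransGen.refl, h1, by rw [hbb],
          by rw [hbb]; exact h2⟩
      · have hm : pos (b p) ∈ arc u' v' he' := by rw [← hl1, hEq]; exact hm2
        rcases hvert u' v' he' (b p) hm with h' | h'
        · exact ⟨b p, Relation.ReflTransGen.refl, h1, by rw [h']; exact hru',
            by rw [h']; exact Relation.ReflTransGen.head he' hv's⟩
        · exact ⟨b p, Relation.ReflTransGen.refl, h1, by rw [h']; exact hru'.tail he',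
            by rw [h']; exact hv's⟩
      · have hm : pos (b r) ∈ arc u v he := by rw [← hl2, ← hEq]; exact hm1
        rcases hvert u v he (b r) hm with h' | h'
        · exact ⟨b r, by rw [h']; exact hpu,
            by rw [h']; exact Relation.ReflTransGen.head he hvq,
            Relation.ReflTransGen.refl, h2⟩
        · exact ⟨b r, by rw [h']; exact hpu.tail he, by rw [h']; exact hvq,
            Relation.ReflTransGen.refl, h2⟩
      · by_cases hpair : (u, v) = (u', v')
        · have hu : u = u' := congrArg Prod.fst hpair
          have hv : v = v' := congrArg Prod.snd hpair
          exact ⟨u, hpu, Relation.ReflTransGen.head he hvq, by rw [hu]; exact hru',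
            by rw [hu]; exact Relation.ReflTransGen.head he' hv's⟩
        · obtain ⟨w, _, hw1, hw2⟩ :=
            hcross u v he u' v' he' hpair ⟨hm1, by rw [hEq]; exact hm2⟩
          refine ⟨w, ?_, ?_, ?_, ?_⟩
          · rcases hw1 with h' | h'
            · rw [h']; exact hpu
            · rw [h']; exact hpu.tail he
          · rcases hw1 with h' | h'
            · rw [h']; exact Relation.ReflTransGen.head he hvq
            · rw [h']; exact hvq
          · rcases hw2 with h' | h'
            · rw [h']; exact hru'
            · rw [h']; exact hru'.tail he'
          · rcases hw2 with h' | h'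
            · rw [h']; exact Relation.ReflTransGen.head he' hv's
            · rw [h']; exact hv's
    have habs1 : ∀ t, ‖f1 t‖ ≤ 1 := by
      intro t; rcases hmem1 t with hl | ⟨u, v, he, _, _, hm⟩
      · rw [hl]; exact hdisk _
      · exact harcdisk _ _ he _ hm
    have habs2 : ∀ t, ‖f2 t‖ ≤ 1 := by
      intro t; rcases hmem2 t with hl | ⟨u, v, he, _, _, hm⟩
      · rw [hl]; exact hdisk _
      · exact harcdisk _ _ he _ hm
    have hN : 0 < N := p.pos
    have hNR : (0:ℝ) < N := by exact_mod_cast hN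
    set θ : ℕ → ℝ := fun k => 2 * π * k / N with hθ
    have hcircPt : ∀ k : Fin N, pos (b k) = Complex.exp (((θ k.val : ℝ) : ℂ) * I) := by
      intro k; rw [hb k]; unfold circPt; simp only [hθ]; congr 1; push_cast; ring
    have hθmono : ∀ {a' b' : ℕ}, a' < b' → θ a' < θ b' := by
      intro a' b' hab
      simp only [hθ]
      rw [div_lt_div_iff_of_pos_right hNR]
      have h' : (a':ℝ) < b' := by exact_mod_cast hab
      nlinarith [Real.pi_pos]
    have hθ0 : ∀ k, 0 ≤ θ k := by intro k; simp only [hθ]; positivity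
    have hθtop : ∀ k, k < N → θ k < 2*π := by
      intro k hk
      simp only [hθ]
      rw [div_lt_iff₀ hNR]
      have h' : (k:ℝ) < N := by exact_mod_cast hk
      nlinarith [Real.pi_pos]
    have hf10' : f1 0 = Complex.exp (((θ p.val : ℝ) : ℂ) * I) := by rw [hf10, hcircPt p]
    have hf11' : f1 1 = Complex.exp (((θ q.val : ℝ) : ℂ) * I) := by rw [hf11, hcircPt q]
    have hf20' : f2 0 = Complex.exp (((θ r.val : ℝ) : ℂ) * I) := by rw [hf20, hcircPt r]
    have hf21' : f2 1 = Complex.exp (((θ s.val : ℝ) : ℂ) * I) := by rw [hf21, hcircPt s]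
    rcases hinter with ⟨hi1, hi2, hi3⟩ | ⟨hi1, hi2, hi3⟩
    · have hpq : p.val ≠ q.val := by omega
      have hrs : r.val ≠ s.val := by omega
      apply core_sym (hθ0 (min p.val q.val)) (hθmono hi1) (hθmono hi2) (hθmono hi3)
        (hθtop _ (max_lt r.isLt s.isLt)) f1 f2 hf1c hf2c habs1 habs2 ?_ ?_ hdisj
      · rcases lt_or_gt_of_ne hpq with h' | h'
        · exact Or.inl ⟨by rw [min_eq_left h'.le]; exact hf10',
            by rw [max_eq_right h'.le]; exact hf11'⟩
        · exact Or.inr ⟨by rw [max_eq_left h'.le]; exact hf10',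
            by rw [min_eq_right h'.le]; exact hf11'⟩
      · rcases lt_or_gt_of_ne hrs with h' | h'
        · exact Or.inl ⟨by rw [min_eq_left h'.le]; exact hf20',
            by rw [max_eq_right h'.le]; exact hf21'⟩
        · exact Or.inr ⟨by rw [max_eq_left h'.le]; exact hf20',
            by rw [min_eq_right h'.le]; exact hf21'⟩
    · have hpq : p.val ≠ q.val := by omega
      have hrs : r.val ≠ s.val := by omega
      apply core_sym (hθ0 (min r.val s.val)) (hθmono hi1) (hθmono hi2) (hθmono hi3)
        (hθtop _ (max_lt p.isLt q.isLt)) f2 f1 hf2c hf1c habs2 habs1 ?_ ?_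
        (fun s' t' => (hdisj t' s').symm)
      · rcases lt_or_gt_of_ne hrs with h' | h'
        · exact Or.inl ⟨by rw [min_eq_left h'.le]; exact hf20',
            by rw [max_eq_right h'.le]; exact hf21'⟩
        · exact Or.inr ⟨by rw [max_eq_left h'.le]; exact hf20',
            by rw [min_eq_right h'.le]; exact hf21'⟩
      · rcases lt_or_gt_of_ne hpq with h' | h'
        · exact Or.inl ⟨by rw [min_eq_left h'.le]; exact hf10',
            by rw [max_eq_right h'.le]; exact hf11'⟩
        · exact Or.inr ⟨by rw [max_eq_left h'.le]; exact hf10',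
            by rw [min_eq_right h'.le]; exact hf11'⟩
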